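/- Let A be a partial H-bimodule algebra satisfying the symmetry condition, and let φ:A→Hom_k(H,A) be defined by φ(a)(h)=h₁⇀a↼S(h₂). Then φ is an injective k-linear map that is multiplicative with respect to the convolution product: φ(ab)=φ(a)∗φ(b) for all a,b∈A. -/

import Mathlib

open TensorProduct

noncomputable section

/-- A partial `H`-bimodule algebra over a Hopf algebra `H`: a unital algebra `A`
with a partial left action `⇀ : H ⊗ A → A` and a partial right action `↼ : A ⊗ H → A`
(encoded as curried `k`-bilinear maps), satisfying the partial (bi)module algebra axioms.
Sweedler sums `Σ h₁ ⊗ h₂ = Δ(h)` are encoded by quantifying over arbitrary finite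
representations of the comultiplication. -/
structure PartialBimoduleAlgebra (k H A : Type) [Field k] [Ring H] [HopfAlgebra k H]
    [Ring A] [Algebra k A] where
  /-- the partial left action `h ⇀ a` -/
  actL : H →ₗ[k] A →ₗ[k] A
  /-- the partial right action `a ↼ h` -/
  actR : A →ₗ[k] H →ₗ[k] A
  /-- `1_H ⇀ a = a` -/
  actL_one : ∀ a : A, actL 1 a = a
  /-- `h ⇀ (ab) = (h₁ ⇀ a)(h₂ ⇀ b)` -/
  actL_mul : ∀ (h : H) (a b : A) (ι : Type) (s : Finset ι) (h₁ h₂ : ι → H),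
    Coalgebra.comul (R := k) h = ∑ i ∈ s, h₁ i ⊗ₜ[k] h₂ i →
    actL h (a * b) = ∑ i ∈ s, actL (h₁ i) a * actL (h₂ i) b
  /-- `h ⇀ (g ⇀ a) = (h₁ ⇀ 1_A)((h₂ g) ⇀ a)` -/
  actL_actL : ∀ (h g : H) (a : A) (ι : Type) (s : Finset ι) (h₁ h₂ : ι → H),
    Coalgebra.comul (R := k) h = ∑ i ∈ s, h₁ i ⊗ₜ[k] h₂ i →
    actL h (actL g a) = ∑ i ∈ s, actL (h₁ i) 1 * actL (h₂ i * g) a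
  /-- `a ↼ 1_H = a` -/
  actR_one : ∀ a : A, actR a 1 = a
  /-- `(ab) ↼ h = (a ↼ h₁)(b ↼ h₂)` -/
  actR_mul : ∀ (h : H) (a b : A) (ι : Type) (s : Finset ι) (h₁ h₂ : ι → H),
    Coalgebra.comul (R := k) h = ∑ i ∈ s, h₁ i ⊗ₜ[k] h₂ i →
    actR (a * b) h = ∑ i ∈ s, actR a (h₁ i) * actR b (h₂ i)
  /-- `(a ↼ g) ↼ h = (1_A ↼ h₁)(a ↼ (g h₂))` -/
  actR_actR : ∀ (g h : H) (a : A) (ι : Type) (s : Finset ι) (h₁ h₂ : ι → H),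
    Coalgebra.comul (R := k) h = ∑ i ∈ s, h₁ i ⊗ₜ[k] h₂ i →
    actR (actR a g) h = ∑ i ∈ s, actR 1 (h₁ i) * actR a (g * h₂ i)
  /-- `(h ⇀ a) ↼ g = h ⇀ (a ↼ g)` -/
  compat : ∀ (h g : H) (a : A), actR (actL h a) g = actL h (actR a g)

/-- The two-fold iterated comultiplication `h ↦ h₁ ⊗ (h₂ ⊗ h₃)`. -/
def comul3 (k H : Type) [Field k] [Ring H] [HopfAlgebra k H] :
    H →ₗ[k] H ⊗[k] (H ⊗[k] H) :=
  LinearMap.lTensor H (Coalgebra.comul (R := k)) ∘ₗ Coalgebra.comul (R := k)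

/-- `μ` is the partial twisted smash product multiplication on `A ⊗ H`:
on pure tensors, `(a ⊗ h)(b ⊗ g) = a (h₁ ⇀ b ↼ S(h₃)) ⊗ h₂ g`. -/
def IsPartialSmashMul (k H A : Type) [Field k] [Ring H] [HopfAlgebra k H]
    [Ring A] [Algebra k A] (P : PartialBimoduleAlgebra k H A)
    (μ : A ⊗[k] H →ₗ[k] A ⊗[k] H →ₗ[k] A ⊗[k] H) : Prop :=
  ∀ (a b : A) (h g : H) (ι : Type) (s : Finset ι) (h₁ h₂ h₃ : ι → H),
    comul3 k H h = ∑ i ∈ s, h₁ i ⊗ₜ[k] (h₂ i ⊗ₜ[k] h₃ i) →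
    μ (a ⊗ₜ[k] h) (b ⊗ₜ[k] g)
      = ∑ i ∈ s,
          (a * P.actR (P.actL (h₁ i) b) (HopfAlgebra.antipode (R := k) (h₃ i)))
            ⊗ₜ[k] (h₂ i * g)

/-- The symmetry condition `(a ↼ S(h₁)) ⊗ h₂ = (a ↼ S(h₂)) ⊗ h₁` in `A ⊗ H`. -/
def SymCond (k H A : Type) [Field k] [Ring H] [HopfAlgebra k H]
    [Ring A] [Algebra k A] (P : PartialBimoduleAlgebra k H A) : Prop :=
  ∀ (a : A) (h : H) (ι : Type) (s : Finset ι) (h₁ h₂ : ι → H),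
    Coalgebra.comul (R := k) h = ∑ i ∈ s, h₁ i ⊗ₜ[k] h₂ i →
    ∑ i ∈ s, P.actR a (HopfAlgebra.antipode (R := k) (h₁ i)) ⊗ₜ[k] h₂ i
      = ∑ i ∈ s, P.actR a (HopfAlgebra.antipode (R := k) (h₂ i)) ⊗ₜ[k] h₁ i

/-- The convolution product on `Hom_k(H, A)`: `(f ∗ g)(h) = f(h₁) g(h₂)`. -/
def conv (k H A : Type) [Field k] [Ring H] [HopfAlgebra k H]
    [Ring A] [Algebra k A] (f g : H →ₗ[k] A) : H →ₗ[k] A :=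
  LinearMap.mul' k A ∘ₗ TensorProduct.map f g ∘ₗ Coalgebra.comul (R := k)

namespace PBAaux
open Coalgebra HopfAlgebra LinearMap

variable {k H B : Type} [Field k] [Ring H] [HopfAlgebra k H] [Ring B] [Algebra k B]

def cvp (f g : H →ₗ[k] B) : H →ₗ[k] B :=
  mul' k B ∘ₗ TensorProduct.map f g ∘ₗ comul

lemma cvp_assoc (f g e : H →ₗ[k] B) : cvp (cvp f g) e = cvp f (cvp g e) := by
  have key : (mul' k B ∘ₗ TensorProduct.map (mul' k B ∘ₗ TensorProduct.map f g) e)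
      = (mul' k B ∘ₗ TensorProduct.map f (mul' k B ∘ₗ TensorProduct.map g e))
        ∘ₗ (TensorProduct.assoc k H H H).toLinearMap := by
    apply TensorProduct.ext_threefold
    intro x y z
    simp [mul_assoc]
  ext h
  have e1 : TensorProduct.map (cvp f g) e
      = TensorProduct.map (mul' k B ∘ₗ TensorProduct.map f g) e ∘ₗ
          TensorProduct.map (comul (R := k)) (LinearMap.id) := by
    rw [← TensorProduct.map_comp]; rfl
  have e2 : TensorProduct.map f (cvp g e)
      = TensorProduct.map f (mul' k B ∘ₗ TensorProduct.map g e) ∘ₗ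
          TensorProduct.map (LinearMap.id) (comul (R := k)) := by
    rw [← TensorProduct.map_comp]; rfl
  have hr : TensorProduct.map (comul (R := k)) (LinearMap.id) (comul h)
      = (TensorProduct.assoc k H H H).symm
          (TensorProduct.map (LinearMap.id) (comul (R := k)) (comul h)) :=
    (Coalgebra.coassoc_symm_apply (R := k) h).symm
  show mul' k B (TensorProduct.map (cvp f g) e (comul h))
      = mul' k B (TensorProduct.map f (cvp g e) (comul h))
  rw [e1, e2]
  simp only [LinearMap.comp_apply]
  rw [hr, ← LinearMap.comp_apply (mul' k B), key]
  simp

lemma cvp_one_left (f : H →ₗ[k] B) :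
    cvp ((Algebra.linearMap k B) ∘ₗ counit) f = f := by
  ext h
  have e1 : TensorProduct.map ((Algebra.linearMap k B) ∘ₗ counit (R := k) (A := H)) f
      = TensorProduct.map (Algebra.linearMap k B) f ∘ₗ
          TensorProduct.map (counit (R := k)) (LinearMap.id) := by
    rw [← TensorProduct.map_comp]; rfl
  show mul' k B (TensorProduct.map _ f (comul h)) = f h
  rw [e1]
  simp only [LinearMap.comp_apply]
  rw [show TensorProduct.map (counit (R := k)) (LinearMap.id) (comul h) = (1 : k) ⊗ₜ[k] h from
    Coalgebra.rTensor_counit_comul (R := k) h]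
  simp

lemma cvp_one_right (f : H →ₗ[k] B) :
    cvp f ((Algebra.linearMap k B) ∘ₗ counit) = f := by
  ext h
  have e1 : TensorProduct.map f ((Algebra.linearMap k B) ∘ₗ counit (R := k) (A := H))
      = TensorProduct.map f (Algebra.linearMap k B) ∘ₗ
          TensorProduct.map (LinearMap.id) (counit (R := k)) := by
    rw [← TensorProduct.map_comp]; rfl
  show mul' k B (TensorProduct.map f _ (comul h)) = f h
  rw [e1]
  simp only [LinearMap.comp_apply]
  rw [show TensorProduct.map (LinearMap.id) (counit (R := k)) (comul h) = h ⊗ₜ[k] (1 : k) from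
    Coalgebra.lTensor_counit_comul (R := k) h]
  simp

/-- `Δ∘S` is a right convolution inverse of `Δ`. -/
lemma cvp_comul_comulS :
    cvp (comul (R := k) (A := H)) (comul ∘ₗ antipode k)
      = (Algebra.linearMap k (H ⊗[k] H)) ∘ₗ counit := by
  have e1 : TensorProduct.map (comul (R := k) (A := H)) (comul ∘ₗ antipode k)
      = TensorProduct.map (comul (R := k) (A := H)) (comul (R := k) (A := H)) ∘ₗ
          TensorProduct.map LinearMap.id (antipode k) := by
    rw [← TensorProduct.map_comp]; rfl
  have e2 : mul' k (H ⊗[k] H) ∘ₗ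
        TensorProduct.map (comul (R := k) (A := H)) (comul (R := k) (A := H))
      = comul ∘ₗ mul' k H := by
    apply TensorProduct.ext'
    intro x y
    simp [Bialgebra.comul_mul]
  have e3 : (comul (R := k) (A := H)) ∘ₗ Algebra.linearMap k H
      = Algebra.linearMap k (H ⊗[k] H) := by
    ext
    simp only [LinearMap.comp_apply, Algebra.linearMap_apply, map_one, Bialgebra.comul_one]
  calc cvp (comul (R := k) (A := H)) (comul ∘ₗ antipode k)
      = mul' k (H ⊗[k] H) ∘ₗ (TensorProduct.map
          (comul (R := k) (A := H)) (comul (R := k) (A := H)) ∘ₗ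
          TensorProduct.map LinearMap.id (antipode k)) ∘ₗ comul := by rw [cvp, e1]
    _ = (mul' k (H ⊗[k] H) ∘ₗ TensorProduct.map
          (comul (R := k) (A := H)) (comul (R := k) (A := H))) ∘ₗ
          (TensorProduct.map LinearMap.id (antipode k) ∘ₗ comul) := by
        simp only [LinearMap.comp_assoc]
    _ = comul ∘ₗ (mul' k H ∘ₗ TensorProduct.map LinearMap.id (antipode k) ∘ₗ comul) := by
        rw [e2]; simp only [LinearMap.comp_assoc]
    _ = comul ∘ₗ (Algebra.linearMap k H ∘ₗ counit) := by
        rw [show (mul' k H ∘ₗ TensorProduct.map LinearMap.id (antipode (R := k) (A := H))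
            ∘ₗ comul) = Algebra.linearMap k H ∘ₗ counit from
          HopfAlgebra.mul_antipode_lTensor_comul]
    _ = (Algebra.linearMap k (H ⊗[k] H)) ∘ₗ counit := by
        rw [← LinearMap.comp_assoc, e3]

/-- the candidate `T = (S ⊗ S) ∘ swap ∘ Δ`. -/
def Tmap (k H : Type) [Field k] [Ring H] [HopfAlgebra k H] : H →ₗ[k] H ⊗[k] H :=
  (TensorProduct.comm k H H).toLinearMap ∘ₗ
    TensorProduct.map (antipode k) (antipode k) ∘ₗ comul

/-- the permutation `g₁⊗(g₂⊗(g₃⊗g₄)) ↦ (g₁⊗g₄)⊗(g₂⊗g₃)`. -/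
def perm1 (k H : Type) [Field k] [Ring H] [HopfAlgebra k H] :
    H ⊗[k] (H ⊗[k] (H ⊗[k] H)) →ₗ[k] (H ⊗[k] H) ⊗[k] (H ⊗[k] H) :=
  (TensorProduct.assoc k H H (H ⊗[k] H)).symm.toLinearMap ∘ₗ
    LinearMap.lTensor H ((TensorProduct.comm k (H ⊗[k] H) H).toLinearMap ∘ₗ
      (TensorProduct.assoc k H H H).symm.toLinearMap)

@[simp] lemma perm1_tmul (g₁ g₂ g₃ g₄ : H) :
    perm1 k H (g₁ ⊗ₜ[k] (g₂ ⊗ₜ[k] (g₃ ⊗ₜ[k] g₄)))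
      = (g₁ ⊗ₜ[k] g₄) ⊗ₜ[k] (g₂ ⊗ₜ[k] g₃) := by
  simp [perm1]

/-- `g ⊗ g' ↦ S(g) * g'`. -/
def betaS (k H : Type) [Field k] [Ring H] [HopfAlgebra k H] : H ⊗[k] H →ₗ[k] H :=
  mul' k H ∘ₗ TensorProduct.map (antipode k) LinearMap.id

@[simp] lemma betaS_tmul (g g' : H) :
    betaS k H (g ⊗ₜ[k] g') = antipode (R := k) g * g' := by simp [betaS]

/-- `T` is a left convolution inverse of `Δ`. -/
lemma cvp_T_comul :
    cvp (Tmap k H) (comul (R := k) (A := H))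
      = (Algebra.linearMap k (H ⊗[k] H)) ∘ₗ counit := by
  ext h
  set r0 := ℛ k h with hr0
  set r1 : (i : r0.ι) → Coalgebra.Repr k (r0.left i) (H × H) := fun i => ℛ k (r0.left i) with hr1
  set r2 : (i : r0.ι) → Coalgebra.Repr k (r0.right i) (H × H) := fun i => ℛ k (r0.right i) with hr2
  set r3 : (i : r0.ι) → (l : (r2 i).ι) → Coalgebra.Repr k ((r2 i).left l) (H × H) :=
    fun i l => ℛ k ((r2 i).left l) with hr3
  set r4 : (i : r0.ι) → (l : (r2 i).ι) → Coalgebra.Repr k ((r2 i).right l) (H × H) :=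
    fun i l => ℛ k ((r2 i).right l) with hr4
  have C1 := Coalgebra.sum_tmul_tmul_eq r0 r1 r2
  have D1 := congrArg (⇑(LinearMap.lTensor H (LinearMap.lTensor H (comul (R := k) (A := H))))) C1
  simp only [map_sum, LinearMap.lTensor_tmul] at D1
  have expandL : ∑ i ∈ r0.index, ∑ j ∈ (r1 i).index,
        (r1 i).left j ⊗ₜ[k] ((r1 i).right j ⊗ₜ[k] comul (R := k) (r0.right i))
      = ∑ i ∈ r0.index, ∑ j ∈ (r1 i).index, ∑ l ∈ (r2 i).index,
        (r1 i).left j ⊗ₜ[k] ((r1 i).right j ⊗ₜ[k] ((r2 i).left l ⊗ₜ[k] (r2 i).right l)) :=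
    Finset.sum_congr rfl fun i _ => Finset.sum_congr rfl fun j _ => by
      rw [← (r2 i).eq, TensorProduct.tmul_sum, TensorProduct.tmul_sum]
  have expandR : ∑ i ∈ r0.index, ∑ l ∈ (r2 i).index,
        r0.left i ⊗ₜ[k] ((r2 i).left l ⊗ₜ[k] comul (R := k) ((r2 i).right l))
      = ∑ i ∈ r0.index, ∑ l ∈ (r2 i).index, ∑ n ∈ (r4 i l).index,
        r0.left i ⊗ₜ[k] ((r2 i).left l ⊗ₜ[k] ((r4 i l).left n ⊗ₜ[k] (r4 i l).right n)) :=
    Finset.sum_congr rfl fun i _ => Finset.sum_congr rfl fun l _ => by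
      rw [← (r4 i l).eq, TensorProduct.tmul_sum, TensorProduct.tmul_sum]
  rw [expandL, expandR] at D1
  have key := congrArg (⇑((TensorProduct.map (betaS k H) (betaS k H)) ∘ₗ
      (TensorProduct.comm k (H ⊗[k] H) (H ⊗[k] H)).toLinearMap ∘ₗ perm1 k H)) D1
  simp only [map_sum, LinearMap.comp_apply, perm1_tmul, LinearEquiv.coe_coe,
    TensorProduct.comm_tmul, TensorProduct.map_tmul, betaS_tmul] at key
  have lhs1 : cvp (Tmap k H) (comul (R := k) (A := H)) h
      = ∑ i ∈ r0.index, ∑ j ∈ (r1 i).index, ∑ l ∈ (r2 i).index,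
          (antipode (R := k) ((r1 i).right j) * (r2 i).left l) ⊗ₜ[k]
          (antipode (R := k) ((r1 i).left j) * (r2 i).right l) := by
    show mul' k (H ⊗[k] H) (TensorProduct.map (Tmap k H) comul (comul h)) = _
    rw [← r0.eq, map_sum, map_sum]
    refine Finset.sum_congr rfl fun i _ => ?_
    rw [TensorProduct.map_tmul]
    show mul' k (H ⊗[k] H) ((Tmap k H) (r0.left i) ⊗ₜ[k] comul (r0.right i)) = _
    rw [Tmap]
    simp only [LinearMap.comp_apply, LinearEquiv.coe_coe]
    rw [← (r1 i).eq, ← (r2 i).eq]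
    simp only [map_sum, TensorProduct.map_tmul, TensorProduct.comm_tmul,
      TensorProduct.sum_tmul, TensorProduct.tmul_sum, map_sum, LinearMap.mul'_apply,
      Algebra.TensorProduct.tmul_mul_tmul]
    rw [Finset.sum_comm]
  rw [lhs1, key]
  have step2 : ∀ i ∈ r0.index,
      (∑ l ∈ (r2 i).index, ∑ n ∈ (r4 i l).index,
        (antipode (R := k) ((r2 i).left l) * (r4 i l).left n) ⊗ₜ[k]
          (antipode (R := k) (r0.left i) * (r4 i l).right n))
      = (1 : H) ⊗ₜ[k] (antipode (R := k) (r0.left i) * r0.right i) := by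
    intro i _
    have C2 := Coalgebra.sum_tmul_tmul_eq (r2 i) (r3 i) (r4 i)
    have key2 := congrArg (⇑((TensorProduct.map (betaS k H)
        (LinearMap.mulLeft k (antipode (R := k) (r0.left i)))) ∘ₗ
        (TensorProduct.assoc k H H H).symm.toLinearMap)) C2
    simp only [map_sum, LinearMap.comp_apply, LinearEquiv.coe_coe,
      TensorProduct.assoc_symm_tmul, TensorProduct.map_tmul, betaS_tmul,
      LinearMap.mulLeft_apply] at key2
    rw [← key2]
    have inner : ∀ l ∈ (r2 i).index,
        (∑ m ∈ (r3 i l).index,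
          (antipode (R := k) ((r3 i l).left m) * (r3 i l).right m) ⊗ₜ[k]
            (antipode (R := k) (r0.left i) * (r2 i).right l))
        = counit (R := k) ((r2 i).left l) •
            ((1 : H) ⊗ₜ[k] (antipode (R := k) (r0.left i) * (r2 i).right l)) := by
      intro l _
      rw [← TensorProduct.sum_tmul, HopfAlgebra.sum_antipode_mul_eq_smul (r3 i l),
        TensorProduct.smul_tmul']
    rw [Finset.sum_congr rfl inner]
    have cnt : ∑ l ∈ (r2 i).index, counit (R := k) ((r2 i).left l) • (r2 i).right l
        = r0.right i := by
      have := congrArg (⇑(TensorProduct.lid k H)) (Coalgebra.sum_counit_tmul_eq (r2 i))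
      simpa only [map_sum, TensorProduct.lid_tmul, one_smul] using this
    calc ∑ l ∈ (r2 i).index, counit (R := k) ((r2 i).left l) •
            ((1 : H) ⊗ₜ[k] (antipode (R := k) (r0.left i) * (r2 i).right l))
        = ∑ l ∈ (r2 i).index,
            (1 : H) ⊗ₜ[k] (antipode (R := k) (r0.left i) *
              (counit (R := k) ((r2 i).left l) • (r2 i).right l)) := by
          refine Finset.sum_congr rfl fun l _ => ?_
          rw [← TensorProduct.tmul_smul, mul_smul_comm]
      _ = (1 : H) ⊗ₜ[k] (antipode (R := k) (r0.left i) *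
            ∑ l ∈ (r2 i).index, counit (R := k) ((r2 i).left l) • (r2 i).right l) := by
          rw [← TensorProduct.tmul_sum, Finset.mul_sum]
      _ = (1 : H) ⊗ₜ[k] (antipode (R := k) (r0.left i) * r0.right i) := by rw [cnt]
  rw [Finset.sum_congr rfl step2]
  rw [← TensorProduct.tmul_sum, HopfAlgebra.sum_antipode_mul_eq_smul r0]
  show _ = algebraMap k (H ⊗[k] H) (counit (R := k) h)
  rw [Algebra.algebraMap_eq_smul_one, Algebra.TensorProduct.one_def, TensorProduct.tmul_smul]

/-- The antipode is an anti-coalgebra morphism. -/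
lemma comul_antipode :
    (comul (R := k)) ∘ₗ (antipode (R := k) (A := H)) = Tmap k H := by
  calc (comul (R := k)) ∘ₗ (antipode (R := k) (A := H))
      = cvp ((Algebra.linearMap k (H ⊗[k] H)) ∘ₗ counit) (comul ∘ₗ antipode k) := by
        rw [cvp_one_left]
    _ = cvp (cvp (Tmap k H) (comul (R := k) (A := H))) (comul ∘ₗ antipode k) := by
        rw [cvp_T_comul]
    _ = cvp (Tmap k H) (cvp (comul (R := k) (A := H)) (comul ∘ₗ antipode k)) :=
        cvp_assoc _ _ _
    _ = cvp (Tmap k H) ((Algebra.linearMap k (H ⊗[k] H)) ∘ₗ counit) := by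
        rw [cvp_comul_comulS]
    _ = Tmap k H := cvp_one_right _

lemma comul_antipode_repr (y : H) (r : Coalgebra.Repr k y (H × H)) :
    comul (R := k) (antipode (R := k) y)
      = ∑ l ∈ r.index, antipode (R := k) (r.right l) ⊗ₜ[k] antipode (R := k) (r.left l) := by
  have := LinearMap.congr_fun (comul_antipode (k := k) (H := H)) y
  rw [LinearMap.comp_apply] at this
  rw [this, Tmap]
  simp only [LinearMap.comp_apply, LinearEquiv.coe_coe]
  rw [← r.eq]
  simp [map_sum]

lemma antipode_one : antipode (R := k) (1 : H) = 1 := by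
  have := HopfAlgebra.mul_antipode_rTensor_comul_apply (R := k) (a := (1 : H))
  simpa [Bialgebra.comul_one, Algebra.TensorProduct.one_def] using this

end PBAaux



namespace PBAaux
open Coalgebra HopfAlgebra LinearMap

variable (k H A : Type) [Field k] [Ring H] [HopfAlgebra k H] [Ring A] [Algebra k A]

variable {k H A} in
/-- `g ⊗ g' ↦ (g ⇀ c) ↼ S(g')`. -/
def Fmap (P : PartialBimoduleAlgebra k H A) (c : A) : H ⊗[k] H →ₗ[k] A :=
  TensorProduct.lift P.actR ∘ₗ TensorProduct.map (P.actL.flip c) (antipode k)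

variable {k H A} in
@[simp] lemma Fmap_tmul (P : PartialBimoduleAlgebra k H A) (c : A) (g g' : H) :
    Fmap P c (g ⊗ₜ[k] g') = P.actR (P.actL g c) (antipode (R := k) g') := by
  simp [Fmap]

variable {k H A} in
/-- `g ↦ c ↼ S(g)`. -/
def chiMap (P : PartialBimoduleAlgebra k H A) (c : A) : H →ₗ[k] A :=
  P.actR c ∘ₗ antipode k

variable {k H A} in
@[simp] lemma chiMap_apply (P : PartialBimoduleAlgebra k H A) (c : A) (g : H) :
    chiMap P c g = P.actR c (antipode (R := k) g) := rfl

end PBAaux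

open PBAaux Coalgebra HopfAlgebra LinearMap

/-- the map `φ : A → Hom_k(H, A)`, `φ(a)(h) = h₁ ⇀ a ↼ S(h₂)`, is an
injective `k`-linear map which is multiplicative for the convolution product:
`φ(ab) = φ(a) ∗ φ(b)`. -/
theorem phi_injective_and_multiplicative
    (k H A : Type) [Field k] [Ring H] [HopfAlgebra k H] [Ring A] [Algebra k A]
    (P : PartialBimoduleAlgebra k H A) (hsym : SymCond k H A P)
    (φ : A →ₗ[k] (H →ₗ[k] A))
    (hφ : ∀ (a : A) (h : H) (ι : Type) (s : Finset ι) (h₁ h₂ : ι → H),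
      Coalgebra.comul (R := k) h = ∑ i ∈ s, h₁ i ⊗ₜ[k] h₂ i →
      φ a h = ∑ i ∈ s, P.actR (P.actL (h₁ i) a) (HopfAlgebra.antipode (R := k) (h₂ i))) :
    Function.Injective φ ∧ ∀ a b : A, φ (a * b) = conv k H A (φ a) (φ b) := by
  have hone : ∀ c : A, φ c 1 = c := by
    intro c
    have hc : Coalgebra.comul (R := k) (1 : H)
        = ∑ _i ∈ ({0} : Finset (Fin 1)), (1 : H) ⊗ₜ[k] (1 : H) := by
      rw [Bialgebra.comul_one]
      simp [Algebra.TensorProduct.one_def]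
    rw [hφ c 1 (Fin 1) {0} (fun _ => 1) (fun _ => 1) hc]
    simp [PBAaux.antipode_one, P.actL_one, P.actR_one]
  constructor
  · intro a₁ a₂ hq
    rw [← hone a₁, ← hone a₂, hq]
  · intro a b
    apply LinearMap.ext
    intro h
    set r0 := ℛ k h with hr0
    set r1 : (i : r0.ι) → Coalgebra.Repr k (r0.left i) (H × H) := fun i => ℛ k (r0.left i) with hr1
    set r2 : (i : r0.ι) → Coalgebra.Repr k (r0.right i) (H × H) := fun i => ℛ k (r0.right i) with hr2
    set r3 : (i : r0.ι) → (l : (r2 i).ι) → Coalgebra.Repr k ((r2 i).left l) (H × H) :=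
      fun i l => ℛ k ((r2 i).left l) with hr3
    set r4 : (i : r0.ι) → (l : (r2 i).ι) → Coalgebra.Repr k ((r2 i).right l) (H × H) :=
      fun i l => ℛ k ((r2 i).right l) with hr4
    -- the 4-leg coassociativity identity
    have C1 := Coalgebra.sum_tmul_tmul_eq r0 r1 r2
    have D1 := congrArg
      (⇑(LinearMap.lTensor H (LinearMap.lTensor H (comul (R := k) (A := H))))) C1
    simp only [map_sum, LinearMap.lTensor_tmul] at D1
    have expandL : ∑ i ∈ r0.index, ∑ j ∈ (r1 i).index,
          (r1 i).left j ⊗ₜ[k] ((r1 i).right j ⊗ₜ[k] comul (R := k) (r0.right i))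
        = ∑ i ∈ r0.index, ∑ j ∈ (r1 i).index, ∑ l ∈ (r2 i).index,
          (r1 i).left j ⊗ₜ[k] ((r1 i).right j ⊗ₜ[k] ((r2 i).left l ⊗ₜ[k] (r2 i).right l)) :=
      Finset.sum_congr rfl fun i _ => Finset.sum_congr rfl fun j _ => by
        rw [← (r2 i).eq, TensorProduct.tmul_sum, TensorProduct.tmul_sum]
    have expandR : ∑ i ∈ r0.index, ∑ l ∈ (r2 i).index,
          r0.left i ⊗ₜ[k] ((r2 i).left l ⊗ₜ[k] comul (R := k) ((r2 i).right l))
        = ∑ i ∈ r0.index, ∑ l ∈ (r2 i).index, ∑ n ∈ (r4 i l).index,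
          r0.left i ⊗ₜ[k] ((r2 i).left l ⊗ₜ[k] ((r4 i l).left n ⊗ₜ[k] (r4 i l).right n)) :=
      Finset.sum_congr rfl fun i _ => Finset.sum_congr rfl fun l _ => by
        rw [← (r4 i l).eq, TensorProduct.tmul_sum, TensorProduct.tmul_sum]
    rw [expandL, expandR] at D1
    -- bridge 1 : E1 = E3
    have key1 := congrArg (⇑(mul' k A ∘ₗ
        TensorProduct.map (Fmap P a) (Fmap P b) ∘ₗ perm1 k H)) D1
    simp only [map_sum, LinearMap.comp_apply, perm1_tmul, TensorProduct.map_tmul,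
      Fmap_tmul, LinearMap.mul'_apply] at key1
    -- bridge 2 : E2 = E5
    have key2 := congrArg (⇑(mul' k A ∘ₗ
        TensorProduct.map (Fmap P a) (Fmap P b) ∘ₗ
        (TensorProduct.assoc k H H (H ⊗[k] H)).symm.toLinearMap)) D1
    simp only [map_sum, LinearMap.comp_apply, LinearEquiv.coe_coe,
      TensorProduct.assoc_symm_tmul, TensorProduct.map_tmul,
      Fmap_tmul, LinearMap.mul'_apply] at key2
    -- bridge 3 (per i) : E4 = E3
    have key3 : ∀ i ∈ r0.index,
        (∑ l ∈ (r2 i).index, ∑ m ∈ (r3 i l).index,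
          P.actR (P.actL (r0.left i) a) (antipode (R := k) ((r2 i).right l)) *
            P.actR (P.actL ((r3 i l).left m) b) (antipode (R := k) ((r3 i l).right m)))
        = ∑ l ∈ (r2 i).index, ∑ n ∈ (r4 i l).index,
          P.actR (P.actL (r0.left i) a) (antipode (R := k) ((r4 i l).right n)) *
            P.actR (P.actL ((r2 i).left l) b) (antipode (R := k) ((r4 i l).left n)) := by
      intro i _
      have C2 := Coalgebra.sum_tmul_tmul_eq (r2 i) (r3 i) (r4 i)
      have key3' := congrArg (⇑(mul' k A ∘ₗ
          TensorProduct.map (chiMap P (P.actL (r0.left i) a)) (Fmap P b) ∘ₗ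
          (TensorProduct.comm k (H ⊗[k] H) H).toLinearMap ∘ₗ
          (TensorProduct.assoc k H H H).symm.toLinearMap)) C2
      simpa only [map_sum, LinearMap.comp_apply, LinearEquiv.coe_coe,
        TensorProduct.assoc_symm_tmul, TensorProduct.comm_tmul, TensorProduct.map_tmul,
        chiMap_apply, Fmap_tmul, LinearMap.mul'_apply] using key3'
    -- bridge 4 (per i, symmetry) : E5 = E4
    have key4 : ∀ i ∈ r0.index,
        (∑ l ∈ (r2 i).index, ∑ n ∈ (r4 i l).index,
          P.actR (P.actL (r0.left i) a) (antipode (R := k) ((r2 i).left l)) *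
            P.actR (P.actL ((r4 i l).left n) b) (antipode (R := k) ((r4 i l).right n)))
        = ∑ l ∈ (r2 i).index, ∑ m ∈ (r3 i l).index,
          P.actR (P.actL (r0.left i) a) (antipode (R := k) ((r2 i).right l)) *
            P.actR (P.actL ((r3 i l).left m) b) (antipode (R := k) ((r3 i l).right m)) := by
      intro i _
      have sym := hsym (P.actL (r0.left i) a) (r0.right i)
        (r2 i).ι (r2 i).index (r2 i).left (r2 i).right (r2 i).eq.symm
      have sy2 := congrArg (⇑(mul' k A ∘ₗ TensorProduct.map (LinearMap.id) (φ b))) sym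
      simp only [map_sum, LinearMap.comp_apply, TensorProduct.map_tmul,
        LinearMap.id_coe, id_eq, LinearMap.mul'_apply] at sy2
      have eL : ∀ l ∈ (r2 i).index,
          P.actR (P.actL (r0.left i) a) (antipode (R := k) ((r2 i).left l)) *
            φ b ((r2 i).right l)
          = ∑ n ∈ (r4 i l).index,
            P.actR (P.actL (r0.left i) a) (antipode (R := k) ((r2 i).left l)) *
              P.actR (P.actL ((r4 i l).left n) b) (antipode (R := k) ((r4 i l).right n)) := by
        intro l _
        rw [hφ b ((r2 i).right l) (r4 i l).ι (r4 i l).index (r4 i l).left (r4 i l).right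
          (r4 i l).eq.symm, Finset.mul_sum]
      have eR : ∀ l ∈ (r2 i).index,
          P.actR (P.actL (r0.left i) a) (antipode (R := k) ((r2 i).right l)) *
            φ b ((r2 i).left l)
          = ∑ m ∈ (r3 i l).index,
            P.actR (P.actL (r0.left i) a) (antipode (R := k) ((r2 i).right l)) *
              P.actR (P.actL ((r3 i l).left m) b) (antipode (R := k) ((r3 i l).right m)) := by
        intro l _
        rw [hφ b ((r2 i).left l) (r3 i l).ι (r3 i l).index (r3 i l).left (r3 i l).right
          (r3 i l).eq.symm, Finset.mul_sum]
      calc (∑ l ∈ (r2 i).index, ∑ n ∈ (r4 i l).index,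
            P.actR (P.actL (r0.left i) a) (antipode (R := k) ((r2 i).left l)) *
              P.actR (P.actL ((r4 i l).left n) b) (antipode (R := k) ((r4 i l).right n)))
          = ∑ l ∈ (r2 i).index,
              P.actR (P.actL (r0.left i) a) (antipode (R := k) ((r2 i).left l)) *
                φ b ((r2 i).right l) :=
            (Finset.sum_congr rfl fun l hl => (eL l hl).symm)
        _ = ∑ l ∈ (r2 i).index,
              P.actR (P.actL (r0.left i) a) (antipode (R := k) ((r2 i).right l)) *
                φ b ((r2 i).left l) := sy2
        _ = ∑ l ∈ (r2 i).index, ∑ m ∈ (r3 i l).index,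
              P.actR (P.actL (r0.left i) a) (antipode (R := k) ((r2 i).right l)) *
                P.actR (P.actL ((r3 i l).left m) b) (antipode (R := k) ((r3 i l).right m)) :=
            Finset.sum_congr rfl eR
    -- expansion of LHS : E1
    have e1 : φ (a * b) h
        = ∑ i ∈ r0.index, ∑ j ∈ (r1 i).index, ∑ l ∈ (r2 i).index,
            P.actR (P.actL ((r1 i).left j) a) (antipode (R := k) ((r2 i).right l)) *
              P.actR (P.actL ((r1 i).right j) b) (antipode (R := k) ((r2 i).left l)) := by
      rw [hφ (a * b) h r0.ι r0.index r0.left r0.right r0.eq.symm]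
      refine Finset.sum_congr rfl fun i _ => ?_
      rw [P.actL_mul (r0.left i) a b (r1 i).ι (r1 i).index (r1 i).left (r1 i).right
        (r1 i).eq.symm, map_sum, LinearMap.sum_apply]
      refine Finset.sum_congr rfl fun j _ => ?_
      exact P.actR_mul (antipode (R := k) (r0.right i)) _ _ (r2 i).ι (r2 i).index
        (fun l => antipode (R := k) ((r2 i).right l))
        (fun l => antipode (R := k) ((r2 i).left l))
        (PBAaux.comul_antipode_repr (r0.right i) (r2 i))
    -- expansion of RHS : E2
    have e2 : conv k H A (φ a) (φ b) h
        = ∑ i ∈ r0.index, ∑ j ∈ (r1 i).index, ∑ l ∈ (r2 i).index,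
            P.actR (P.actL ((r1 i).left j) a) (antipode (R := k) ((r1 i).right j)) *
              P.actR (P.actL ((r2 i).left l) b) (antipode (R := k) ((r2 i).right l)) := by
      show mul' k A (TensorProduct.map (φ a) (φ b) (comul h)) = _
      rw [← r0.eq, map_sum, map_sum]
      refine Finset.sum_congr rfl fun i _ => ?_
      rw [TensorProduct.map_tmul, LinearMap.mul'_apply,
        hφ a (r0.left i) (r1 i).ι (r1 i).index (r1 i).left (r1 i).right (r1 i).eq.symm,
        hφ b (r0.right i) (r2 i).ι (r2 i).index (r2 i).left (r2 i).right (r2 i).eq.symm,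
        Finset.sum_mul_sum]
    -- assemble
    rw [e1, key1]
    show _ = conv k H A (φ a) (φ b) h
    rw [e2, key2]
    refine (Finset.sum_congr rfl fun i hi => ?_)
    exact (key3 i hi).symm.trans (key4 i hi).symm
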